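/- Let D^{ex} ⊂ F_2^48 be the 9-dimensional exceptional triply even code of length 48 (generated by the appended triangular-graph code and the all-one vector). Then dim(D^{ex}·D^{ex}) = 37 = C(9,2) + 1, where D^{ex}·D^{ex} is the span of all coordinatewise products of pairs of codewords. -/
import Mathlib

set_option maxRecDepth 100000

/-- `Ω`: the set of 2-element subsets of `X = {1,…,10}`. -/
def TwoSubset : Type := {S : Finset (Fin 10) // S.card = 2}

instance : Fintype TwoSubset := by unfold TwoSubset; infer_instance
instance : DecidableEq TwoSubset := by unfold TwoSubset; infer_instance

/-- `γ_{{i,j}} ∈ F₂^Ω`: the characteristic vector of `{S ∈ Ω : |S ∩ {i,j}| = 1}`. -/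
def triGamma (p : TwoSubset) : TwoSubset → ZMod 2 :=
  fun S => if (S.1 ∩ p.1).card = 1 then 1 else 0

/-- `ι : F₂^45 → F₂^48` appending three zero coordinates. -/
def iotaExt (v : TwoSubset → ZMod 2) : TwoSubset ⊕ Fin 3 → ZMod 2 :=
  Sum.elim v 0

/-- The exceptional triply even code `D^{ex}` of length 48: generated by the (appended)
rows `ι(γ_{{i,j}})` of the incidence matrix of the triangular graph on 10 points together
with the all-one vector. -/
def Dex : Submodule (ZMod 2) (TwoSubset ⊕ Fin 3 → ZMod 2) :=
  Submodule.span (ZMod 2)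
    (Set.range (fun p => iotaExt (triGamma p)) ∪ {(1 : TwoSubset ⊕ Fin 3 → ZMod 2)})

/-- `D·D`: the span of all coordinatewise products of pairs of codewords. -/
def DdotD {ι : Type*} [Fintype ι] (D : Submodule (ZMod 2) (ι → ZMod 2)) :
    Submodule (ZMod 2) (ι → ZMod 2) :=
  Submodule.span (ZMod 2) {z | ∃ a ∈ D, ∃ b ∈ D, z = a * b}

/- ### Auxiliary definitions -/

namespace DexAux

open Pointwise

abbrev V := TwoSubset ⊕ Fin 3 → ZMod 2

/-- `γ_{{i,j}}` parametrized by two points. -/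
def gamma' (i j : Fin 10) : TwoSubset → ZMod 2 :=
  fun S => if (S.1 ∩ ({i, j} : Finset (Fin 10))).card = 1 then 1 else 0

/-- The product `γ_{0i}·γ_{0j}` (for `{i,j} = s` with `0 ∉ s`). -/
def prodfun (s : Finset (Fin 10)) : TwoSubset → ZMod 2 :=
  fun T => if T.1 = s ∨ ((0 : Fin 10) ∈ T.1 ∧ T.1 ∩ s = ∅) then 1 else 0

/-- Pairs avoiding `0`. -/
def PS : Type := {S : TwoSubset // (0 : Fin 10) ∉ S.1}

instance : Fintype PS := by unfold PS; infer_instance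
instance : DecidableEq PS := by unfold PS; infer_instance

/-- The 37 basis vectors of `D^{ex}·D^{ex}`. -/
def bvec : Option PS → V
  | none => 1
  | some S => iotaExt (prodfun S.1.1)

lemma card37 : Fintype.card (Option PS) = 37 := by decide

/- ### Pointwise computational facts -/

lemma lemA : ∀ T : TwoSubset, ∀ i j : Fin 10, i ≠ 0 → j ≠ 0 → i ≠ j →
    gamma' i j T = gamma' 0 i T + gamma' 0 j T := by decide

lemma lemB : ∀ T : TwoSubset, ∀ i j : Fin 10, i ≠ 0 → j ≠ 0 → i ≠ j →
    gamma' 0 i T * gamma' 0 j T = prodfun {i, j} T := by decide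

lemma lemC : ∀ T : TwoSubset, ∀ i : Fin 10, i ≠ 0 →
    gamma' 0 i T = ∑ j ∈ (Finset.univ \ {0, i}), gamma' 0 i T * gamma' 0 j T := by decide

lemma mul_self_fun (v : TwoSubset → ZMod 2) : v * v = v := by
  funext T
  have h : ∀ a : ZMod 2, a * a = a := by decide
  exact h (v T)

lemma triGamma_eq {p : TwoSubset} {a b : Fin 10} (hp : p.1 = {a, b}) :
    triGamma p = gamma' a b := by
  funext T; simp only [triGamma, gamma', hp]

lemma gamma'_comm (i j : Fin 10) : gamma' i j = gamma' j i := by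
  funext T; simp only [gamma']; rw [Finset.pair_comm]

/- ### `iotaExt` is multiplicative and additive -/

lemma iotaExt_mul (u v : TwoSubset → ZMod 2) :
    iotaExt (u * v) = iotaExt u * iotaExt v := by
  funext x; cases x <;> simp [iotaExt]

lemma iotaExt_sum {α : Type*} (s : Finset α) (f : α → (TwoSubset → ZMod 2)) :
    iotaExt (∑ i ∈ s, f i) = ∑ i ∈ s, iotaExt (f i) := by
  funext x
  cases x with
  | inl T => simp [iotaExt, Finset.sum_apply]
  | inr k => simp [iotaExt, Finset.sum_apply]

/- ### Membership of generator products in the span of `bvec` -/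

def B : Set V := Set.range bvec

lemma mem_span_B_of_ne (i j : Fin 10) (hi : i ≠ 0) (hj : j ≠ 0) (hij : i ≠ j) :
    iotaExt (gamma' 0 i * gamma' 0 j) ∈ Submodule.span (ZMod 2) B := by
  have h2 : ({i, j} : Finset (Fin 10)).card = 2 := Finset.card_pair hij
  have h0 : (0 : Fin 10) ∉ ({i, j} : Finset (Fin 10)) := by
    simp [Finset.mem_insert, Ne.symm hi, Ne.symm hj]
  have hp : gamma' 0 i * gamma' 0 j = prodfun {i, j} := by
    funext T; rw [Pi.mul_apply]; exact lemB T i j hi hj hij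
  have : iotaExt (gamma' 0 i * gamma' 0 j) = bvec (some ⟨⟨{i, j}, h2⟩, h0⟩) := by
    rw [hp]; rfl
  rw [this]
  exact Submodule.subset_span ⟨some ⟨⟨{i, j}, h2⟩, h0⟩, rfl⟩

lemma mem_span_B (i j : Fin 10) (hi : i ≠ 0) (hj : j ≠ 0) :
    iotaExt (gamma' 0 i * gamma' 0 j) ∈ Submodule.span (ZMod 2) B := by
  by_cases hij : i = j
  · subst hij
    rw [mul_self_fun]
    have hC : gamma' 0 i = ∑ j ∈ (Finset.univ \ {0, i}), gamma' 0 i * gamma' 0 j := by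
      funext T
      rw [Finset.sum_apply]
      simp only [Pi.mul_apply]
      exact lemC T i hi
    rw [hC, iotaExt_sum]
    refine Submodule.sum_mem _ fun j hjm => ?_
    have hjm' := Finset.mem_sdiff.mp hjm
    have hj0 : j ≠ 0 := fun h => hjm'.2 (by simp [h])
    have hji : i ≠ j := fun h => hjm'.2 (by simp [h])
    exact mem_span_B_of_ne i j hi hj0 hji
  · exact mem_span_B_of_ne i j hi hj hij

/-- Every `γ_p` is a sum of `γ_{0i}`'s with `i ≠ 0`. -/
lemma gamma_decomp (p : TwoSubset) :
    ∃ s : Finset (Fin 10), (∀ i ∈ s, i ≠ 0) ∧ triGamma p = ∑ i ∈ s, gamma' 0 i := by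
  obtain ⟨a, b, hab, hp⟩ := Finset.card_eq_two.mp p.2
  by_cases ha : a = 0
  · subst ha
    refine ⟨{b}, by simpa using Ne.symm hab, ?_⟩
    rw [triGamma_eq hp, Finset.sum_singleton]
  · by_cases hb : b = 0
    · subst hb
      refine ⟨{a}, by simpa using ha, ?_⟩
      rw [triGamma_eq hp, gamma'_comm, Finset.sum_singleton]
    · refine ⟨{a, b}, ?_, ?_⟩
      · intro i hi
        rcases Finset.mem_insert.mp hi with h | h
        · exact h ▸ ha
        · exact (Finset.mem_singleton.mp h) ▸ hb
      · rw [triGamma_eq hp, Finset.sum_pair hab]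
        funext T
        rw [Pi.add_apply]
        exact lemA T a b ha hb hab

lemma iota_gamma_mem (p : TwoSubset) :
    iotaExt (triGamma p) ∈ Submodule.span (ZMod 2) B := by
  obtain ⟨s, hs0, hs⟩ := gamma_decomp p
  rw [hs, iotaExt_sum]
  refine Submodule.sum_mem _ fun i hi => ?_
  have : gamma' 0 i = gamma' 0 i * gamma' 0 i := (mul_self_fun _).symm
  rw [this]
  exact mem_span_B i i (hs0 i hi) (hs0 i hi)

lemma iota_gamma_prod_mem (p q : TwoSubset) :
    iotaExt (triGamma p) * iotaExt (triGamma q) ∈ Submodule.span (ZMod 2) B := by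
  obtain ⟨s, hs0, hs⟩ := gamma_decomp p
  obtain ⟨t, ht0, ht⟩ := gamma_decomp q
  rw [← iotaExt_mul, hs, ht, Finset.sum_mul_sum, iotaExt_sum]
  refine Submodule.sum_mem _ fun i hi => ?_
  rw [iotaExt_sum]
  exact Submodule.sum_mem _ fun j hj => mem_span_B i j (hs0 i hi) (ht0 j hj)

/- ### The span identification -/

def G : Set V :=
  Set.range (fun p => iotaExt (triGamma p)) ∪ {(1 : V)}

lemma one_mem_span_B : (1 : V) ∈ Submodule.span (ZMod 2) B :=
  Submodule.subset_span ⟨none, rfl⟩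

lemma DdotD_Dex_eq : DdotD Dex = Submodule.span (ZMod 2) B := by
  have hset : {z : V | ∃ a ∈ Dex, ∃ b ∈ Dex, z = a * b} = (Dex : Set V) * (Dex : Set V) := by
    ext z
    rw [Set.mem_mul]
    constructor
    · rintro ⟨a, ha, b, hb, rfl⟩; exact ⟨a, ha, b, hb, rfl⟩
    · rintro ⟨a, ha, b, hb, rfl⟩; exact ⟨a, ha, b, hb, rfl⟩
  have h1 : DdotD Dex = Submodule.span (ZMod 2) (G * G : Set V) := by
    rw [DdotD, hset, ← Submodule.mul_eq_span_mul_set, Dex, Submodule.span_mul_span]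
    rfl
  rw [h1]
  apply le_antisymm
  · apply Submodule.span_le.mpr
    rintro z hz
    rw [Set.mem_mul] at hz
    obtain ⟨x, hx, y, hy, rfl⟩ := hz
    rcases hx with ⟨p, rfl⟩ | hx1
    · rcases hy with ⟨q, rfl⟩ | hy1
      · exact iota_gamma_prod_mem p q
      · rw [Set.mem_singleton_iff] at hy1
        rw [hy1, mul_one]
        exact iota_gamma_mem p
    · rw [Set.mem_singleton_iff] at hx1
      rcases hy with ⟨q, rfl⟩ | hy1
      · rw [hx1, one_mul]
        exact iota_gamma_mem q
      · rw [Set.mem_singleton_iff] at hy1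
        rw [hx1, hy1, mul_one]
        exact one_mem_span_B
  · apply Submodule.span_le.mpr
    rintro z ⟨k, rfl⟩
    have hGsub : ∀ w ∈ G, ∀ w' ∈ G, w * w' ∈ Submodule.span (ZMod 2) (G * G : Set V) :=
      fun w hw w' hw' => Submodule.subset_span (Set.mul_mem_mul hw hw')
    cases k with
    | none =>
      have : bvec none = (1 : V) * 1 := by simp [bvec]
      rw [this]
      exact hGsub 1 (Or.inr rfl) 1 (Or.inr rfl)
    | some S =>
      obtain ⟨a, b, hab, hp⟩ := Finset.card_eq_two.mp S.1.2
      have ha : a ≠ 0 := fun h => S.2 (by rw [hp]; simp [h])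
      have hb : b ≠ 0 := fun h => S.2 (by rw [hp]; simp [h])
      have h2a : ({0, a} : Finset (Fin 10)).card = 2 := Finset.card_pair (Ne.symm ha)
      have h2b : ({0, b} : Finset (Fin 10)).card = 2 := Finset.card_pair (Ne.symm hb)
      have hprod : bvec (some S) =
          iotaExt (triGamma ⟨{0, a}, h2a⟩) * iotaExt (triGamma ⟨{0, b}, h2b⟩) := by
        have e1 : triGamma (⟨{0, a}, h2a⟩ : TwoSubset) = gamma' 0 a := triGamma_eq rfl
        have e2 : triGamma (⟨{0, b}, h2b⟩ : TwoSubset) = gamma' 0 b := triGamma_eq rfl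
        have e3 : gamma' 0 a * gamma' 0 b = prodfun S.1.1 := by
          funext T
          rw [Pi.mul_apply, hp]
          exact lemB T a b ha hb hab
        rw [e1, e2, ← iotaExt_mul, e3]
        rfl
      rw [hprod]
      exact hGsub _ (Or.inl ⟨_, rfl⟩) _ (Or.inl ⟨_, rfl⟩)

/- ### Linear independence of `bvec` -/

def phi : V →ₗ[ZMod 2] (Option PS → ZMod 2) where
  toFun v := fun k =>
    match k with
    | none => v (Sum.inr 0)
    | some S => v (Sum.inl S.1) + v (Sum.inr 0)
  map_add' u v := by
    funext k
    cases k with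
    | none => rfl
    | some S => simp [Pi.add_apply]; ring
  map_smul' c v := by
    funext k
    cases k with
    | none => rfl
    | some S => simp [Pi.smul_apply, smul_eq_mul, mul_add]

lemma phi_bvec (k : Option PS) : phi (bvec k) = Pi.single k 1 := by
  funext k'
  rw [Pi.single_apply]
  cases k with
  | none =>
    cases k' with
    | none => rfl
    | some S' =>
      show (1 : ZMod 2) + 1 = if (some S' : Option PS) = none then 1 else 0
      rw [if_neg (Option.some_ne_none S')]
      decide
  | some S =>
    cases k' with
    | none =>
      show (0 : ZMod 2) = if (none : Option PS) = some S then 1 else 0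
      simp
    | some S' =>
      show prodfun S.1.1 S'.1 + 0 = if (some S' : Option PS) = some S then 1 else 0
      rw [add_zero]
      unfold prodfun
      by_cases h : S'.1.1 = S.1.1
      · have : S' = S := Subtype.ext (Subtype.ext h)
        simp [h, this]
      · have hno : ¬((0 : Fin 10) ∈ S'.1.1 ∧ S'.1.1 ∩ S.1.1 = ∅) := fun hc => S'.2 hc.1
        have hne : S' ≠ S := fun hc => h (by rw [hc])
        simp [h, hno, hne]

lemma bvec_indep : LinearIndependent (ZMod 2) bvec := by
  apply LinearIndependent.of_comp phi
  have h1 : (phi ∘ bvec) = fun (k : Option PS) => Pi.single k (1 : ZMod 2) := funext phi_bvec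
  have h2 : (fun (k : Option PS) => Pi.single k (1 : ZMod 2)) =
      ⇑(Pi.basisFun (ZMod 2) (Option PS)) := by
    funext k; simp
  rw [h1, h2]
  exact (Pi.basisFun (ZMod 2) (Option PS)).linearIndependent

end DexAux

/-- `dim (D^{ex}·D^{ex}) = 37 = C(9,2) + 1`. -/
theorem finrank_DdotD_Dex :
    Module.finrank (ZMod 2) ↥(DdotD Dex) = 37 ∧ 37 = Nat.choose 9 2 + 1 := by
  constructor
  · rw [DexAux.DdotD_Dex_eq]
    have : DexAux.B = Set.range DexAux.bvec := rfl
    rw [this, finrank_span_eq_card DexAux.bvec_indep, DexAux.card37]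
  · rfl
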